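/- For two probability densities p and q on a measure space with reference measure ν, and any constant c, the Kullback-Leibler divergence satisfies KL(p‖q) ≤ (1/2)·exp(‖log(p/q) − c‖_∞) · ∫ p (log(p/q) − c)² dν. -/

import Mathlib

open MeasureTheory


lemma aux1 (u : ℝ) (hu : 0 ≤ u) : Real.exp (-u) ≤ 1 - u + u ^ 2 / 2 := by
  have hd : ∀ x : ℝ, HasDerivAt (fun x => 1 - x + x ^ 2 / 2 - Real.exp (-x))
      (-1 + x + Real.exp (-x)) x := by
    intro x
    have h1 : HasDerivAt (fun x : ℝ => x ^ 2 / 2) x x := by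
      have := (hasDerivAt_pow 2 x).div_const 2
      exact this.congr_deriv (by norm_num)
    have h2 : HasDerivAt (fun x : ℝ => Real.exp (-x)) (Real.exp (-x) * (-1)) x :=
      (hasDerivAt_neg x).exp
    have := (((hasDerivAt_id x).const_sub 1).add h1).sub h2
    exact this.congr_deriv (by ring)
  have hmono : MonotoneOn (fun x => 1 - x + x ^ 2 / 2 - Real.exp (-x)) (Set.Ici 0) := by
    apply monotoneOn_of_deriv_nonneg (convex_Ici 0)
    · exact (Continuous.continuousOn (by continuity))
    · intro x hx
      exact (hd x).differentiableAt.differentiableWithinAt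
    · intro x hx
      rw [(hd x).deriv]
      have := Real.add_one_le_exp (-x)
      linarith
  have h0 := hmono (Set.self_mem_Ici) hu hu
  simp [Real.exp_zero] at h0 ⊢
  linarith

lemma aux2 (v : ℝ) (hv : 0 ≤ v) : Real.exp v - v - 1 ≤ v ^ 2 / 2 * Real.exp v := by
  have hd : ∀ x : ℝ, HasDerivAt (fun x => x ^ 2 / 2 - 1 + (x + 1) * Real.exp (-x))
      (x - x * Real.exp (-x)) x := by
    intro x
    have h1 : HasDerivAt (fun x : ℝ => x ^ 2 / 2) x x := by
      have := (hasDerivAt_pow 2 x).div_const 2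
      exact this.congr_deriv (by norm_num)
    have h2 : HasDerivAt (fun x : ℝ => (x + 1) * Real.exp (-x))
        (1 * Real.exp (-x) + (x + 1) * (Real.exp (-x) * (-1))) x :=
      ((hasDerivAt_id x).add_const 1).mul (hasDerivAt_neg x).exp
    have := (h1.sub_const 1).add h2
    exact this.congr_deriv (by ring)
  have hmono : MonotoneOn (fun x => x ^ 2 / 2 - 1 + (x + 1) * Real.exp (-x)) (Set.Ici 0) := by
    apply monotoneOn_of_deriv_nonneg (convex_Ici 0)
    · exact (Continuous.continuousOn (by continuity))
    · intro x hx
      exact (hd x).differentiableAt.differentiableWithinAt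
    · intro x hx
      rw [(hd x).deriv]
      have hx0 : (0:ℝ) < x := by simpa using hx
      have h1 : Real.exp (-x) ≤ 1 := Real.exp_le_one_iff.mpr (by linarith)
      nlinarith
  have h0 := hmono (Set.self_mem_Ici) hv hv
  simp [Real.exp_zero] at h0
  -- h0 : 0 ≤ v ^ 2 / 2 - 1 + (v + 1) * Real.exp (-v)
  -- want: exp v - v - 1 ≤ v^2/2 * exp v ; multiply h0 by exp v
  have hev : 0 < Real.exp v := Real.exp_pos v
  have := mul_le_mul_of_nonneg_right h0 hev.le
  rw [Real.exp_neg] at *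
  have h3 : Real.exp v * (Real.exp v)⁻¹ = 1 := mul_inv_cancel₀ hev.ne'
  nlinarith [hev]

lemma auxmain (u M : ℝ) (h : |u| ≤ M) : Real.exp (-u) + u - 1 ≤ u ^ 2 / 2 * Real.exp M := by
  have hM : 0 ≤ M := le_trans (abs_nonneg u) h
  have hexpM : (1:ℝ) ≤ Real.exp M := Real.one_le_exp hM
  rcases le_or_gt 0 u with hu | hu
  · have := aux1 u hu
    nlinarith [sq_nonneg u]
  · have hv : 0 ≤ -u := by linarith
    have := aux2 (-u) hv
    have h2 : Real.exp (-u) ≤ Real.exp M := by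
      apply Real.exp_le_exp.mpr
      calc -u ≤ |u| := by rw [abs_of_neg hu]
        _ ≤ M := h
    simp only [neg_sq] at this
    nlinarith [sq_nonneg u]


/-- KL(p‖q) ≤ (1/2)·exp(‖log(p/q) − c‖_∞) · ∫ p (log(p/q) − c)² dν -/
theorem stmt0 {Ω : Type*} [MeasurableSpace Ω] (ν : Measure Ω) [SigmaFinite ν]
    (p q : Ω → ℝ) (c : ℝ)
    (hpm : Measurable p) (hqm : Measurable q)
    (hp_pos : ∀ᵐ x ∂ν, 0 < p x) (hq_pos : ∀ᵐ x ∂ν, 0 < q x)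
    (hp1 : ∫ x, p x ∂ν = 1) (hq1 : ∫ x, q x ∂ν = 1)
    (hbdd : ∃ M, ∀ᵐ x ∂ν, |Real.log (p x / q x)| ≤ M)
    (hint1 : Integrable (fun x => p x * Real.log (p x / q x)) ν)
    (hint2 : Integrable (fun x => p x * (Real.log (p x / q x) - c) ^ 2) ν) :
    ∫ x, p x * Real.log (p x / q x) ∂ν ≤
      (1 / 2) * Real.exp (essSup (fun x => |Real.log (p x / q x) - c|) ν) *
        ∫ x, p x * (Real.log (p x / q x) - c) ^ 2 ∂ν := by
  obtain ⟨B, hB⟩ := hbdd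
  set L : Ω → ℝ := fun x => Real.log (p x / q x) with hL
  set M : ℝ := essSup (fun x => |L x - c|) ν with hM
  have hMle : ∀ᵐ x ∂ν, |L x - c| ≤ M := by
    apply ae_le_essSup
    refine ⟨B + |c|, Filter.eventually_map.mpr ?_⟩
    filter_upwards [hB] with x hx
    calc |L x - c| ≤ |L x| + |c| := abs_sub _ _
      _ ≤ B + |c| := by linarith
  have hp_int : Integrable p ν := by
    by_contra h; rw [integral_undef h] at hp1; norm_num at hp1
  have hq_int : Integrable q ν := by
    by_contra h; rw [integral_undef h] at hq1; norm_num at hq1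
  have hpg_int : Integrable (fun x => p x * (L x - c)) ν := by
    have heq : (fun x => p x * (L x - c)) = fun x => p x * L x - c * p x :=
      funext fun x => by ring
    rw [heq]; exact hint1.sub (hp_int.const_mul c)
  have hqexp_eq : ∀ᵐ x ∂ν, p x * Real.exp (-(L x - c)) = Real.exp c * q x := by
    filter_upwards [hp_pos, hq_pos] with x hp hq
    have hpq : Real.exp (L x) = p x / q x := Real.exp_log (div_pos hp hq)
    rw [neg_sub, Real.exp_sub, hpq]
    field_simp
  have hqexp_int : Integrable (fun x => p x * Real.exp (-(L x - c))) ν :=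
    (hq_int.const_mul (Real.exp c)).congr (Filter.EventuallyEq.symm hqexp_eq)
  have hqexp_val : ∫ x, p x * Real.exp (-(L x - c)) ∂ν = Real.exp c := by
    rw [integral_congr_ae hqexp_eq, integral_const_mul, hq1, mul_one]
  have hpt : ∀ᵐ x ∂ν, p x * (L x - c) ≤
      (p x - p x * Real.exp (-(L x - c))) + Real.exp M / 2 * (p x * (L x - c) ^ 2) := by
    filter_upwards [hMle, hp_pos] with x hMx hpx
    have h1 := auxmain (L x - c) M hMx
    nlinarith [mul_le_mul_of_nonneg_left h1 hpx.le]
  have hsub_int : Integrable (fun x => p x - p x * Real.exp (-(L x - c))) ν :=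
    hp_int.sub hqexp_int
  have hconst_int : Integrable (fun x => Real.exp M / 2 * (p x * (L x - c) ^ 2)) ν :=
    hint2.const_mul _
  have hRHS_int : Integrable (fun x =>
      (p x - p x * Real.exp (-(L x - c))) + Real.exp M / 2 * (p x * (L x - c) ^ 2)) ν :=
    hsub_int.add hconst_int
  have hineq := integral_mono_ae hpg_int hRHS_int hpt
  rw [integral_add hsub_int hconst_int,
    integral_sub hp_int hqexp_int, hp1, hqexp_val, integral_const_mul] at hineq
  have hsplit : ∫ x, p x * (L x - c) ∂ν = (∫ x, p x * L x ∂ν) - c := by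
    have heq : (fun x => p x * (L x - c)) = fun x => p x * L x - c * p x :=
      funext fun x => by ring
    rw [heq, integral_sub hint1 (hp_int.const_mul c), integral_const_mul, hp1, mul_one]
  have hc : c + 1 ≤ Real.exp c := Real.add_one_le_exp c
  have hring : (1 / 2) * Real.exp M * (∫ x, p x * (L x - c) ^ 2 ∂ν)
      = Real.exp M / 2 * ∫ x, p x * (L x - c) ^ 2 ∂ν := by ring
  rw [hsplit] at hineq
  rw [hring]
  linarith
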